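/- Let E be a finite set and let r be a function from subsets of E to nonnegative integers satisfying the matroid rank axioms (M1), (M2), (M3). Then r (viewed as a real-valued function on the finite subsets of E) is a diversity rank function on E, i.e., it satisfies (R1) r(∅) = 0, (R2) r(x) ≤ r(x ∪ y) ≤ r(x) + r(y), (R3) if r(x ∪ y) = r(x) then r(x ∪ y ∪ z) = r(x ∪ z), and (R4) if r(x ∪ y ∪ z) = r(x) + r(y ∪ z) then r(x ∪ y) = r(x) + r(y), for all x, y, z ⊆ E. -/

import Mathlib

theorem matroid_rank_is_diversity_rank {α : Type*} [Fintype α] [DecidableEq α]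
    (r : Finset α → ℕ)
    (hM1 : ∀ x : Finset α, r x ≤ x.card)
    (hM2 : ∀ x y : Finset α, r (x ∪ y) + r (x ∩ y) ≤ r x + r y)
    (hM3 : ∀ x y : Finset α, y.card = 1 → r x ≤ r (x ∪ y) ∧ r (x ∪ y) ≤ r x + 1) :
    ((r ∅ : ℝ) = 0) ∧
    (∀ x y : Finset α, (r x : ℝ) ≤ (r (x ∪ y) : ℝ) ∧ (r (x ∪ y) : ℝ) ≤ (r x : ℝ) + (r y : ℝ)) ∧
    (∀ x y z : Finset α, (r (x ∪ y) : ℝ) = (r x : ℝ) → (r (x ∪ y ∪ z) : ℝ) = (r (x ∪ z) : ℝ)) ∧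
    (∀ x y z : Finset α, (r (x ∪ y ∪ z) : ℝ) = (r x : ℝ) + (r (y ∪ z) : ℝ) →
      (r (x ∪ y) : ℝ) = (r x : ℝ) + (r y : ℝ)) := by
  have hempty : r ∅ = 0 := Nat.le_zero.mp (by simpa using hM1 ∅)
  have hmonoU : ∀ s u : Finset α, r s ≤ r (s ∪ u) := by
    intro s u
    induction u using Finset.induction_on with
    | empty => simp
    | @insert a u ha ih =>
      have h1 : s ∪ insert a u = (s ∪ u) ∪ {a} := by
        ext x; simp [Finset.mem_insert, Finset.mem_union]
      rw [h1]
      exact le_trans ih (hM3 (s ∪ u) {a} (by simp)).1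
  have hmono : ∀ s t : Finset α, s ⊆ t → r s ≤ r t := by
    intro s t hst
    have : t = s ∪ t := by rw [Finset.union_eq_right.mpr hst]
    rw [this]; exact hmonoU s t
  have hsub : ∀ x y : Finset α, r (x ∪ y) ≤ r x + r y := fun x y =>
    le_trans (Nat.le_add_right _ _) (hM2 x y)
  have hR3 : ∀ x y z : Finset α, r (x ∪ y) = r x → r (x ∪ y ∪ z) = r (x ∪ z) := by
    intro x y z h
    have key := hM2 (x ∪ z) (x ∪ y)
    have hins : x ⊆ (x ∪ z) ∩ (x ∪ y) :=
      Finset.subset_inter Finset.subset_union_left Finset.subset_union_left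
    have h2 : r x ≤ r ((x ∪ z) ∩ (x ∪ y)) := hmono _ _ hins
    have huni : (x ∪ z) ∪ (x ∪ y) = x ∪ y ∪ z := by
      ext a; simp [Finset.mem_union]; try tauto
    rw [huni, h] at key
    have hle : r (x ∪ y ∪ z) ≤ r (x ∪ z) := by omega
    have hge : r (x ∪ z) ≤ r (x ∪ y ∪ z) := by
      apply hmono
      intro a ha; simp at ha ⊢; tauto
    omega
  have hR4 : ∀ x y z : Finset α, r (x ∪ y ∪ z) = r x + r (y ∪ z) →
      r (x ∪ y) = r x + r y := by
    intro x y z h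
    have key := hM2 (x ∪ y) (y ∪ z)
    have huni : (x ∪ y) ∪ (y ∪ z) = x ∪ y ∪ z := by
      ext a; simp [Finset.mem_union]; try tauto
    have hins : y ⊆ (x ∪ y) ∩ (y ∪ z) :=
      Finset.subset_inter Finset.subset_union_right Finset.subset_union_left
    have h2 : r y ≤ r ((x ∪ y) ∩ (y ∪ z)) := hmono _ _ hins
    rw [huni, h] at key
    have := hsub x y
    omega
  refine ⟨by exact_mod_cast hempty, fun x y => ⟨by exact_mod_cast hmonoU x y,
    by exact_mod_cast hsub x y⟩, fun x y z h => ?_, fun x y z h => ?_⟩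
  · exact_mod_cast hR3 x y z (by exact_mod_cast h)
  · exact_mod_cast hR4 x y z (by exact_mod_cast h)
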